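/- Let ω, Υ, Q be real-valued functions on a neighborhood of 0 in ℝ, with ω and Υ C² and Q continuous, satisfying the radial eikonal equation 2r·Υ'(r) + r²·(Υ'(r)² + Q(r)) = e^{2(ω(r) − Υ(r))} − 1 for all r near 0. Then Υ(0) = ω(0), Υ'(0) = (1/2)·ω'(0), and if moreover ω, Υ are C³ and Q is C¹, then Υ''(0) = (1/3)·[ω''(0) + (1/4)·ω'(0)² − Q(0)]. -/

import Mathlib

open Filter Topology

private lemma aux_sq (c : ℝ → ℝ) (hc : ContinuousAt c 0) :
    HasDerivAt (fun r : ℝ => r ^ 2 * c r) 0 0 := by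
  rw [hasDerivAt_iff_tendsto_slope]
  have ht : Tendsto (fun r : ℝ => r * c r) (𝓝[≠] (0:ℝ)) (𝓝 0) := by
    have h0 : Tendsto (fun r : ℝ => r * c r) (𝓝 (0:ℝ)) (𝓝 (0 * c 0)) :=
      (continuousAt_id.mul hc)
    simpa using h0.mono_left nhdsWithin_le_nhds
  refine ht.congr' ?_
  filter_upwards [self_mem_nhdsWithin] with r hr
  have hr' : r ≠ 0 := hr
  rw [slope_def_field]
  field_simp
  ring

theorem stmt6 (ω Υ Q : ℝ → ℝ) (U : Set ℝ) (hUo : IsOpen U) (hU0 : (0 : ℝ) ∈ U)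
    (hω : ContDiffOn ℝ 2 ω U) (hΥ : ContDiffOn ℝ 2 Υ U) (hQ : ContinuousOn Q U)
    (heq : ∀ r ∈ U, 2 * r * deriv Υ r + r ^ 2 * ((deriv Υ r) ^ 2 + Q r)
      = Real.exp (2 * (ω r - Υ r)) - 1) :
    Υ 0 = ω 0 ∧ deriv Υ 0 = (1 / 2) * deriv ω 0 ∧
      (ContDiffOn ℝ 3 ω U → ContDiffOn ℝ 3 Υ U → ContDiffOn ℝ 1 Q U →
        deriv (deriv Υ) 0
          = (1 / 3) * (deriv (deriv ω) 0 + (1 / 4) * (deriv ω 0) ^ 2 - Q 0)) := by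
  have hUmem : U ∈ 𝓝 (0:ℝ) := hUo.mem_nhds hU0
  -- Part 1
  have h0 : Υ 0 = ω 0 := by
    have := heq 0 hU0
    simp only [mul_zero, zero_mul, zero_pow, ne_eq, OfNat.ofNat_ne_zero,
      not_false_eq_true, zero_add, add_zero] at this
    have h1 : Real.exp (2 * (ω 0 - Υ 0)) = 1 := by linarith
    rw [Real.exp_eq_one_iff] at h1
    linarith
  have hexp0 : Real.exp (2 * (ω 0 - Υ 0)) = 1 := by
    rw [Real.exp_eq_one_iff]; rw [h0]; ring
  -- basic differentiability
  have hωd : DifferentiableAt ℝ ω 0 :=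
    (hω.differentiableOn (by norm_num)).differentiableAt hUmem
  have hΥd : DifferentiableAt ℝ Υ 0 :=
    (hΥ.differentiableOn (by norm_num)).differentiableAt hUmem
  have hΥ'cd : ContDiffOn ℝ 1 (deriv Υ) U := hΥ.deriv_of_isOpen hUo (by norm_num)
  have hΥ'd : DifferentiableAt ℝ (deriv Υ) 0 :=
    (hΥ'cd.differentiableOn (by norm_num)).differentiableAt hUmem
  -- F and G
  set F : ℝ → ℝ := fun r => 2 * r * deriv Υ r + r ^ 2 * ((deriv Υ r) ^ 2 + Q r) with hF_def
  set G : ℝ → ℝ := fun r => Real.exp (2 * (ω r - Υ r)) - 1 with hG_def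
  have hFG : F =ᶠ[𝓝 (0:ℝ)] G := by
    filter_upwards [hUmem] with r hr using heq r hr
  -- derivative of F at 0
  have hc0 : ContinuousAt (fun r => (deriv Υ r) ^ 2 + Q r) 0 := by
    exact ((hΥ'd.continuousAt.pow 2).add ((hQ.continuousAt hUmem)))
  have hF0 : HasDerivAt F (2 * deriv Υ 0) 0 := by
    have h1 : HasDerivAt (fun r : ℝ => 2 * r * deriv Υ r)
        (2 * deriv Υ 0 + 2 * 0 * deriv (deriv Υ) 0) 0 := by
      have := (((hasDerivAt_id (0:ℝ)).const_mul 2).fun_mul hΥ'd.hasDerivAt)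
      simpa [mul_comm] using this
    have h2 := aux_sq _ hc0
    have := h1.fun_add h2
    simpa using this
  have hG0 : HasDerivAt G (2 * (deriv ω 0 - deriv Υ 0)) 0 := by
    have hg : HasDerivAt (fun r => 2 * (ω r - Υ r))
        (2 * (deriv ω 0 - deriv Υ 0)) 0 :=
      ((hωd.hasDerivAt.sub hΥd.hasDerivAt).const_mul 2)
    have := (hg.exp).sub_const 1
    simpa [hexp0, hG_def] using this
  have hd1 : 2 * deriv Υ 0 = 2 * (deriv ω 0 - deriv Υ 0) := by
    have e1 : deriv F 0 = deriv G 0 := hFG.deriv_eq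
    rw [hF0.deriv, hG0.deriv] at e1
    exact e1
  have h1 : deriv Υ 0 = (1 / 2) * deriv ω 0 := by linarith
  refine ⟨h0, h1, ?_⟩
  -- Part 3
  intro hω3 hΥ3 hQ1
  have hΥ'cd2 : ContDiffOn ℝ 2 (deriv Υ) U := hΥ3.deriv_of_isOpen hUo (by norm_num)
  have hΥ''cd : ContDiffOn ℝ 1 (deriv (deriv Υ)) U :=
    hΥ'cd2.deriv_of_isOpen hUo (by norm_num)
  have hΥ''d : DifferentiableAt ℝ (deriv (deriv Υ)) 0 :=
    (hΥ''cd.differentiableOn (by norm_num)).differentiableAt hUmem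
  have hω'cd : ContDiffOn ℝ 1 (deriv ω) U := hω.deriv_of_isOpen hUo (by norm_num)
  have hω'd : DifferentiableAt ℝ (deriv ω) 0 :=
    (hω'cd.differentiableOn (by norm_num)).differentiableAt hUmem
  have hQd : DifferentiableOn ℝ Q U := hQ1.differentiableOn (by norm_num)
  have hQ'c : ContinuousOn (deriv Q) U := by
    have h : ContDiffOn ℝ 0 (deriv Q) U := hQ1.deriv_of_isOpen hUo (by norm_num)
    exact h.continuousOn
  -- F₁ and G₁ : derivatives on U
  set F₁ : ℝ → ℝ := fun r => 2 * deriv Υ r + 2 * r * deriv (deriv Υ) r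
      + (2 * r * ((deriv Υ r) ^ 2 + Q r)
        + r ^ 2 * (2 * deriv Υ r * deriv (deriv Υ) r + deriv Q r)) with hF₁_def
  set G₁ : ℝ → ℝ := fun r =>
      Real.exp (2 * (ω r - Υ r)) * (2 * (deriv ω r - deriv Υ r)) with hG₁_def
  have hFhas : ∀ r ∈ U, HasDerivAt F (F₁ r) r := by
    intro r hr
    have hUr : U ∈ 𝓝 r := hUo.mem_nhds hr
    have hΥ'r : HasDerivAt (deriv Υ) (deriv (deriv Υ) r) r :=
      ((hΥ'cd2.differentiableOn (by norm_num)).differentiableAt hUr).hasDerivAt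
    have hQr : HasDerivAt Q (deriv Q r) r :=
      ((hQd.differentiableAt hUr)).hasDerivAt
    have h1 : HasDerivAt (fun x : ℝ => 2 * x * deriv Υ x)
        (2 * deriv Υ r + 2 * r * deriv (deriv Υ) r) r := by
      have := (((hasDerivAt_id r).const_mul 2).fun_mul hΥ'r)
      convert this using 1 <;> (try simp only [id_eq]) <;> first | rfl | ring
    have h2 : HasDerivAt (fun x : ℝ => x ^ 2 * ((deriv Υ x) ^ 2 + Q x))
        (2 * r * ((deriv Υ r) ^ 2 + Q r)
          + r ^ 2 * (2 * deriv Υ r * deriv (deriv Υ) r + deriv Q r)) r := by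
      have hsq : HasDerivAt (fun x : ℝ => x ^ 2) (2 * r) r := by
        simpa using hasDerivAt_pow 2 r
      have hc : HasDerivAt (fun x => (deriv Υ x) ^ 2 + Q x)
          (2 * deriv Υ r * deriv (deriv Υ) r + deriv Q r) r := by
        have hp : HasDerivAt (fun x => (deriv Υ x) ^ 2)
            (2 * deriv Υ r * deriv (deriv Υ) r) r := by
          have := hΥ'r.fun_pow 2
          convert this using 1 <;> (try simp only [id_eq]) <;> first | rfl | ring
        exact hp.fun_add hQr
      have := hsq.fun_mul hc
      convert this using 1 <;> (try simp only [id_eq]) <;> first | rfl | ring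
    exact h1.fun_add h2
  have hGhas : ∀ r ∈ U, HasDerivAt G (G₁ r) r := by
    intro r hr
    have hUr : U ∈ 𝓝 r := hUo.mem_nhds hr
    have hg : HasDerivAt (fun x => 2 * (ω x - Υ x))
        (2 * (deriv ω r - deriv Υ r)) r := by
      have hωr := ((hω.differentiableOn (by norm_num)).differentiableAt hUr).hasDerivAt
      have hΥr := ((hΥ.differentiableOn (by norm_num)).differentiableAt hUr).hasDerivAt
      exact ((hωr.sub hΥr).const_mul 2)
    exact (hg.exp).sub_const 1
  have hF₁G₁ : ∀ r ∈ U, F₁ r = G₁ r := by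
    intro r hr
    have hFGr : F =ᶠ[𝓝 r] G := by
      filter_upwards [hUo.mem_nhds hr] with x hx using heq x hx
    have := hFGr.deriv_eq
    rw [(hFhas r hr).deriv, (hGhas r hr).deriv] at this
    exact this
  have hF₁G₁e : F₁ =ᶠ[𝓝 (0:ℝ)] G₁ := by
    filter_upwards [hUmem] with r hr using hF₁G₁ r hr
  -- derivative of F₁ at 0
  have hF₁0 : HasDerivAt F₁
      (2 * deriv (deriv Υ) 0 + 2 * deriv (deriv Υ) 0
        + 2 * ((deriv Υ 0) ^ 2 + Q 0)) 0 := by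
    have t1 : HasDerivAt (fun r => 2 * deriv Υ r) (2 * deriv (deriv Υ) 0) 0 :=
      hΥ'd.hasDerivAt.const_mul 2
    have t2 : HasDerivAt (fun r : ℝ => 2 * r * deriv (deriv Υ) r)
        (2 * deriv (deriv Υ) 0) 0 := by
      have := (((hasDerivAt_id (0:ℝ)).const_mul 2).fun_mul hΥ''d.hasDerivAt)
      convert this using 1 <;> (try simp only [id_eq]) <;> first | rfl | ring
    have t3 : HasDerivAt (fun r : ℝ => 2 * r * ((deriv Υ r) ^ 2 + Q r))
        (2 * ((deriv Υ 0) ^ 2 + Q 0)) 0 := by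
      have hc : DifferentiableAt ℝ (fun r => (deriv Υ r) ^ 2 + Q r) 0 :=
        (hΥ'd.pow 2).add (hQd.differentiableAt hUmem)
      have := (((hasDerivAt_id (0:ℝ)).const_mul 2).fun_mul hc.hasDerivAt)
      convert this using 1 <;> (try simp only [id_eq]) <;> first | rfl | ring
    have t4 : HasDerivAt
        (fun r : ℝ => r ^ 2 * (2 * deriv Υ r * deriv (deriv Υ) r + deriv Q r)) 0 0 := by
      refine aux_sq _ ?_
      exact ((continuousAt_const.mul hΥ'd.continuousAt).mul hΥ''d.continuousAt).add
        (hQ'c.continuousAt hUmem)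
    have := (t1.fun_add t2).fun_add (t3.fun_add t4)
    convert this using 1 <;> first | rfl | ring
  -- derivative of G₁ at 0
  have hG₁0 : HasDerivAt G₁
      (2 * (deriv ω 0 - deriv Υ 0) * (2 * (deriv ω 0 - deriv Υ 0))
        + 2 * (deriv (deriv ω) 0 - deriv (deriv Υ) 0)) 0 := by
    have hg : HasDerivAt (fun r => 2 * (ω r - Υ r))
        (2 * (deriv ω 0 - deriv Υ 0)) 0 :=
      ((hωd.hasDerivAt.sub hΥd.hasDerivAt).const_mul 2)
    have hv : HasDerivAt (fun r => 2 * (deriv ω r - deriv Υ r))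
        (2 * (deriv (deriv ω) 0 - deriv (deriv Υ) 0)) 0 :=
      ((hω'd.hasDerivAt.sub hΥ'd.hasDerivAt).const_mul 2)
    have := (hg.exp).fun_mul hv
    convert this using 1 <;> (try simp only [id_eq, hexp0]) <;> first | rfl | ring
  have e2 : 2 * deriv (deriv Υ) 0 + 2 * deriv (deriv Υ) 0
        + 2 * ((deriv Υ 0) ^ 2 + Q 0)
      = 2 * (deriv ω 0 - deriv Υ 0) * (2 * (deriv ω 0 - deriv Υ 0))
        + 2 * (deriv (deriv ω) 0 - deriv (deriv Υ) 0) := by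
    have := hF₁G₁e.deriv_eq
    rw [hF₁0.deriv, hG₁0.deriv] at this
    exact this
  rw [h1] at e2
  linear_combination e2 / 6
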